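/- The locally accessible joint entropy satisfies S_A(ρ_SA) = H({p_a}) + S(ρ_S | {Π_A^k}) = S(Φ_A(ρ_SA)), and hence the classical demon's work W^C = kT[log₂ d_SA − S_A(ρ_SA)] never exceeds the quantum demon's work W^Q = kT[log₂ d_SA − S(ρ_SA)]. -/

import Mathlib

open Matrix BigOperators Kronecker

/-- Von Neumann entropy in base 2, via eigenvalues of a Hermitian matrix. -/
noncomputable def Sent {d : Type*} [Fintype d] [DecidableEq d] (ρ : Matrix d d ℂ) : ℝ :=
  if h : ρ.IsHermitian then ∑ i, Real.negMulLog (h.eigenvalues i) / Real.log 2 else 0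

/-- Rank-one projector |v⟩⟨v| (for a unit vector v). -/
def proj {d : Type*} (v : d → ℂ) : Matrix d d ℂ := Matrix.vecMulVec v (star v)

/-- `e` is an orthonormal basis (a complete family of rank-one orthogonal projectors). -/
def ONB {d : Type*} [Fintype d] [DecidableEq d] (e : d → d → ℂ) : Prop :=
  ∀ k l, star (e k) ⬝ᵥ e l = if k = l then 1 else 0

variable {s a : Type*} [Fintype s] [DecidableEq s] [Fintype a] [DecidableEq a]

/-- Partial trace over the system `S` : the marginal on `A`. -/
noncomputable def ptrS (ρ : Matrix (s × a) (s × a) ℂ) : Matrix a a ℂ :=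
  Matrix.of fun i j => ∑ k, ρ (k, i) (k, j)

/-- Partial trace over the apparatus `A` : the marginal on `S`. -/
noncomputable def ptrA (ρ : Matrix (s × a) (s × a) ℂ) : Matrix s s ℂ :=
  Matrix.of fun i j => ∑ k, ρ (i, k) (j, k)

/-- Non-selective rank-one projective measurement on `A`:
`Φ_A(ρ) = Σ_k (I_S ⊗ Π_A^k) ρ (I_S ⊗ Π_A^k)`. -/
noncomputable def pinchA (e : a → a → ℂ) (ρ : Matrix (s × a) (s × a) ℂ) :
    Matrix (s × a) (s × a) ℂ :=
  ∑ k, ((1 : Matrix s s ℂ) ⊗ₖ proj (e k)) * ρ * ((1 : Matrix s s ℂ) ⊗ₖ proj (e k))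

/-- Outcome probability `p_k = Tr[(I_S ⊗ Π_A^k) ρ]`. -/
noncomputable def pOut (e : a → a → ℂ) (ρ : Matrix (s × a) (s × a) ℂ) (k : a) : ℝ :=
  (((1 : Matrix s s ℂ) ⊗ₖ proj (e k)) * ρ).trace.re

/-- Normalized post-measurement state `ρ_k`. -/
noncomputable def postState (e : a → a → ℂ) (ρ : Matrix (s × a) (s × a) ℂ) (k : a) :
    Matrix (s × a) (s × a) ℂ :=
  ((pOut e ρ k : ℂ))⁻¹ •
    (((1 : Matrix s s ℂ) ⊗ₖ proj (e k)) * ρ * ((1 : Matrix s s ℂ) ⊗ₖ proj (e k)))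

set_option linter.unusedSectionVars false

section Aux
open Polynomial
variable {n : Type*} [Fintype n] [DecidableEq n]

/-- matrix whose columns are the vectors `w j` -/
noncomputable def colM (w : n → n → ℂ) : Matrix n n ℂ := Matrix.of fun i j => w j i

lemma colM_left {w : n → n → ℂ} (hw : ONB w) : (colM w)ᴴ * colM w = 1 := by
  ext i j
  have := hw i j
  simpa [colM, Matrix.mul_apply, Matrix.conjTranspose_apply, Matrix.one_apply, dotProduct]
    using this

lemma colM_right {w : n → n → ℂ} (hw : ONB w) : colM w * (colM w)ᴴ = 1 :=
  mul_eq_one_comm.mp (colM_left hw)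

lemma ONB.complete {w : n → n → ℂ} (hw : ONB w) (p q : n) :
    ∑ kk, w kk p * (starRingEnd ℂ) (w kk q) = if p = q then 1 else 0 := by
  have := congrFun (congrFun (colM_right hw) p) q
  simpa [colM, Matrix.mul_apply, Matrix.conjTranspose_apply, Matrix.one_apply] using this

lemma ONB.complete' {w : n → n → ℂ} (hw : ONB w) (p q : n) :
    ∑ kk, (starRingEnd ℂ) (w kk p) * w kk q = if p = q then 1 else 0 := by
  have := congrArg (starRingEnd ℂ) (hw.complete p q)
  simpa [map_sum, mul_comm, apply_ite (starRingEnd ℂ), eq_comm] using this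

lemma ONB.expand {w : n → n → ℂ} (hw : ONB w) (x : n → ℂ) (y : n) :
    ∑ j, (star (w j) ⬝ᵥ x) * w j y = x y := by
  have : ∀ j, (star (w j) ⬝ᵥ x) * w j y = ∑ z, w j y * (starRingEnd ℂ) (w j z) * x z := by
    intro j
    simp [dotProduct, Finset.mul_sum, Finset.sum_mul]
    refine Finset.sum_congr rfl fun z _ => by ring
  rw [Finset.sum_congr rfl fun j _ => this j, Finset.sum_comm]
  have : ∀ z, ∑ j, w j y * (starRingEnd ℂ) (w j z) * x z
      = (if y = z then 1 else 0) * x z := by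
    intro z
    rw [← Finset.sum_mul, hw.complete y z]
  rw [Finset.sum_congr rfl fun z _ => this z]
  simp

end Aux

section Spectral
open Polynomial
variable {n : Type*} [Fintype n] [DecidableEq n]
lemma charpoly_conj_aux {U V D : Matrix n n ℂ} (hUV : U * V = 1) :
    (U * D * V).charpoly = D.charpoly := by
  have hcomm : ∀ M : Matrix n n ℂ[X], scalar n (X : ℂ[X]) * M = M * scalar n X := fun M =>
    (scalar_commute (X : ℂ[X]) (fun r' => Commute.all _ _) M).eq
  have h1 : charmatrix (U * D * V) = U.map C * charmatrix D * V.map C := by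
    unfold charmatrix
    simp only [RingHom.mapMatrix_apply, mul_sub, sub_mul]
    congr 1
    · symm
      rw [show (U.map (C : ℂ → ℂ[X])) * scalar n (X : ℂ[X]) = scalar n X * U.map C from
        (hcomm _).symm, mul_assoc, ← Matrix.map_mul, hUV,
        Matrix.map_one _ (map_zero C) (map_one C), mul_one]
    · rw [← Matrix.map_mul, ← Matrix.map_mul]
  have h2 : (U.map (C : ℂ → ℂ[X])).det * (V.map (C : ℂ → ℂ[X])).det = 1 := by
    rw [← det_mul, ← Matrix.map_mul, hUV, Matrix.map_one _ (map_zero C) (map_one C), det_one]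
  calc (U * D * V).charpoly
      = (U.map (C : ℂ → ℂ[X])).det * (charmatrix D).det * (V.map (C : ℂ → ℂ[X])).det := by
        rw [Matrix.charpoly, h1, det_mul, det_mul]
    _ = (charmatrix D).det * ((U.map (C : ℂ → ℂ[X])).det * (V.map (C : ℂ → ℂ[X])).det) := by ring
    _ = D.charpoly := by rw [h2, mul_one, Matrix.charpoly]

lemma charpoly_diagonal_c (d : n → ℂ) : (diagonal d).charpoly = ∏ i, (X - C (d i)) := by
  have h : charmatrix (diagonal d) = diagonal fun i => X - C (d i) := by
    ext i j
    by_cases h : i = j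
    · subst h; simp
    · simp [charmatrix_apply_ne _ _ _ h, diagonal_apply_ne _ h, diagonal_apply_ne d h]
  rw [Matrix.charpoly, h, det_diagonal]

/-- decomposition from an eigen-ONB -/
lemma eig_decomp {A : Matrix n n ℂ} {w : n → n → ℂ} (hw : ONB w) {μ : n → ℝ}
    (heig : ∀ i, A *ᵥ w i = (μ i : ℂ) • w i) :
    A = colM w * diagonal (fun i => (μ i : ℂ)) * (colM w)ᴴ := by
  have hAW : A * colM w = colM w * diagonal (fun i => (μ i : ℂ)) := by
    ext i j
    have := congrFun (heig j) i
    simp only [mulVec, dotProduct, Pi.smul_apply, smul_eq_mul] at this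
    simp [colM, Matrix.mul_apply, diagonal, mul_comm, this]
  calc A = A * (colM w * (colM w)ᴴ) := by rw [colM_right hw, mul_one]
    _ = (A * colM w) * (colM w)ᴴ := by rw [mul_assoc]
    _ = _ := by rw [hAW]

lemma trace_eq_sum_mu {A : Matrix n n ℂ} {w : n → n → ℂ} (hw : ONB w) {μ : n → ℝ}
    (heig : ∀ i, A *ᵥ w i = (μ i : ℂ) • w i) :
    A.trace = ((∑ i, μ i : ℝ) : ℂ) := by
  rw [eig_decomp hw heig, Matrix.trace_mul_cycle, colM_left hw, one_mul, trace_diagonal]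
  push_cast
  rfl

theorem sum_f_eig {A : Matrix n n ℂ} (hA : A.IsHermitian) {w : n → n → ℂ} (hw : ONB w)
    {μ : n → ℝ} (heig : ∀ i, A *ᵥ w i = (μ i : ℂ) • w i) (f : ℝ → ℝ) :
    ∑ i, f (hA.eigenvalues i) = ∑ i, f (μ i) := by
  have hdecomp := eig_decomp hw heig
  have hspec := hA.spectral_theorem
  have h1 : (diagonal fun i => (μ i : ℂ)).charpoly = A.charpoly := by
    conv_rhs => rw [hdecomp]
    exact (charpoly_conj_aux (colM_right hw)).symm
  have h2 : (diagonal fun i => ((hA.eigenvalues i : ℝ) : ℂ)).charpoly = A.charpoly := by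
    conv_rhs => rw [hspec]
    have hU : (hA.eigenvectorUnitary : Matrix n n ℂ) * (star hA.eigenvectorUnitary : Matrix n n ℂ) = 1 :=
      (Matrix.mem_unitaryGroup_iff).mp hA.eigenvectorUnitary.2
    exact (charpoly_conj_aux hU).symm
  have h3 : ∏ i, (X - C ((μ i : ℂ))) = ∏ i, (X - C ((hA.eigenvalues i : ℂ))) := by
    rw [← charpoly_diagonal_c, ← charpoly_diagonal_c, h1, h2]
  have h4 : Finset.univ.val.map (fun i => ((μ i : ℂ)))
      = Finset.univ.val.map (fun i => ((hA.eigenvalues i : ℂ))) := by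
    have e1 : ∀ g : n → ℂ, ∏ i, (X - C (g i))
        = ((Finset.univ.val.map g).map fun z => X - C z).prod := by
      intro g
      rw [Multiset.map_map, ← Finset.prod_eq_multiset_prod]
      rfl
    have := congrArg Polynomial.roots h3
    rwa [e1, e1, roots_multiset_prod_X_sub_C, roots_multiset_prod_X_sub_C] at this
  have e2 : ∀ g : n → ℝ, ∑ i, f (g i)
      = ((Finset.univ.val.map (fun i => ((g i : ℂ)))).map fun z => f z.re).sum := by
    intro g
    rw [Multiset.map_map, ← Finset.sum_eq_multiset_sum]
    simp [Function.comp]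
  rw [e2, e2, h4]

end Spectral

section Jensen
variable {n : Type*} [Fintype n] [DecidableEq n]

lemma negMulLog_majorize {lam mu : n → ℝ} {D : n → n → ℝ}
    (hlam : ∀ j, 0 ≤ lam j) (hD : ∀ i j, 0 ≤ D i j)
    (hrow : ∀ i, ∑ j, D i j = 1) (hcol : ∀ j, ∑ i, D i j = 1)
    (hmu : ∀ i, mu i = ∑ j, D i j * lam j) :
    ∑ j, Real.negMulLog (lam j) ≤ ∑ i, Real.negMulLog (mu i) := by
  have key : ∀ i, ∑ j, D i j * Real.negMulLog (lam j) ≤ Real.negMulLog (mu i) := by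
    intro i
    have := Real.concaveOn_negMulLog.le_map_sum (t := Finset.univ) (w := D i) (p := lam)
      (fun j _ => hD i j) (hrow i) (fun j _ => hlam j)
    simpa [smul_eq_mul, hmu i] using this
  calc ∑ j, Real.negMulLog (lam j) = ∑ j, (∑ i, D i j) * Real.negMulLog (lam j) := by
        simp [hcol]
    _ = ∑ i, ∑ j, D i j * Real.negMulLog (lam j) := by
        rw [Finset.sum_comm]
        simp [Finset.sum_mul]
    _ ≤ ∑ i, Real.negMulLog (mu i) := Finset.sum_le_sum fun i _ => key i

lemma star_dot_conj (x y : n → ℂ) : star x ⬝ᵥ y = (starRingEnd ℂ) (star y ⬝ᵥ x) := by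
  simp only [dotProduct, Pi.star_apply, map_sum, _root_.map_mul, RingHom.id_apply,
    Complex.star_def, Complex.conj_conj]
  exact Finset.sum_congr rfl fun i _ => mul_comm _ _

lemma dot_sum {m : Type*} [Fintype m] (x : n → ℂ) (f : m → n → ℂ) :
    x ⬝ᵥ (∑ j, f j) = ∑ j, x ⬝ᵥ f j := by
  simp only [dotProduct, Finset.sum_apply, Finset.mul_sum]
  exact Finset.sum_comm

lemma mulVec_sum' {m : Type*} [Fintype m] (A : Matrix n n ℂ) (f : m → n → ℂ) :
    A *ᵥ (∑ j, f j) = ∑ j, A *ᵥ f j := by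
  rw [← Matrix.mulVecLin_apply, map_sum]
  simp [Matrix.mulVecLin_apply]

/-- quadratic form of a matrix with an eigen-ONB -/
lemma quad_form_eq {A : Matrix n n ℂ} {v : n → n → ℂ} (hv : ONB v) {lam : n → ℝ}
    (heig : ∀ j, A *ᵥ v j = (lam j : ℂ) • v j) (x : n → ℂ) :
    star x ⬝ᵥ (A *ᵥ x) = ∑ j, (lam j : ℂ) * ((Complex.normSq (star (v j) ⬝ᵥ x) : ℝ) : ℂ) := by
  have hx : A *ᵥ x = ∑ j, ((star (v j) ⬝ᵥ x) * (lam j : ℂ)) • v j := by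
    have hexp : x = ∑ j, (star (v j) ⬝ᵥ x) • v j := by
      funext y
      rw [Finset.sum_apply]
      simpa [Pi.smul_apply, smul_eq_mul] using (hv.expand x y).symm
    conv_lhs => rw [hexp]
    rw [mulVec_sum']
    refine Finset.sum_congr rfl fun j _ => ?_
    rw [Matrix.mulVec_smul, heig j, smul_smul]
  rw [hx, dot_sum]
  refine Finset.sum_congr rfl fun j _ => ?_
  rw [dotProduct_smul]
  have h1 : star x ⬝ᵥ v j = (starRingEnd ℂ) (star (v j) ⬝ᵥ x) := star_dot_conj x (v j)
  rw [smul_eq_mul, h1]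
  rw [Complex.normSq_eq_conj_mul_self]
  push_cast
  ring

lemma sum_normSq_eq_one {v : n → n → ℂ} (hv : ONB v) {x : n → ℂ} (hx : star x ⬝ᵥ x = 1) :
    ∑ j, Complex.normSq (star (v j) ⬝ᵥ x) = 1 := by
  have hc : ((∑ j, Complex.normSq (star (v j) ⬝ᵥ x) : ℝ) : ℂ)
      = ∑ j, (star x ⬝ᵥ v j) * (star (v j) ⬝ᵥ x) := by
    push_cast
    refine Finset.sum_congr rfl fun j _ => ?_
    rw [star_dot_conj x (v j), Complex.normSq_eq_conj_mul_self]
  have h2 : ∑ j, (star x ⬝ᵥ v j) * (star (v j) ⬝ᵥ x) = star x ⬝ᵥ x := by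
    have : ∀ j, (star x ⬝ᵥ v j) * (star (v j) ⬝ᵥ x)
        = star x ⬝ᵥ ((star (v j) ⬝ᵥ x) • v j) := by
      intro j
      rw [dotProduct_smul, smul_eq_mul, mul_comm]
    rw [Finset.sum_congr rfl fun j _ => this j, ← dot_sum]
    congr 1
    funext y
    rw [Finset.sum_apply]
    simpa [Pi.smul_apply, smul_eq_mul] using hv.expand x y
  have := hc.trans (h2.trans hx)
  exact_mod_cast this

end Jensen


section Concrete
variable (e : a → a → ℂ) (ρ : Matrix (s × a) (s × a) ℂ)

/-- compressed block of `ρ` for outcome `kk` -/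
noncomputable def Mbl (kk : a) : Matrix s s ℂ :=
  Matrix.of fun i j => ∑ p, ∑ q, (starRingEnd ℂ) (e kk p) * e kk q * ρ (i, p) (j, q)

lemma proj_apply (v : a → ℂ) (p q : a) : proj v p q = v p * (starRingEnd ℂ) (v q) := rfl

/-- elementary tensor vector -/
def tensV (u : s → ℂ) (x : a → ℂ) : s × a → ℂ := fun p => u p.1 * x p.2

lemma PkρPk_eq (kk : a) :
    ((1 : Matrix s s ℂ) ⊗ₖ proj (e kk)) * ρ * ((1 : Matrix s s ℂ) ⊗ₖ proj (e kk))
      = Mbl e ρ kk ⊗ₖ proj (e kk) := by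
  ext ⟨i, p⟩ ⟨j, q⟩
  simp only [Matrix.mul_apply, kroneckerMap_apply, Fintype.sum_prod_type, Matrix.one_apply,
    proj_apply, Mbl, Matrix.of_apply]
  simp only [ite_mul, one_mul, zero_mul, Finset.sum_ite_eq', Finset.mem_univ, if_true,
    mul_ite, mul_zero, mul_one, Finset.sum_ite_eq, Finset.mul_sum, Finset.sum_mul]
  simp only [Finset.sum_ite_irrel, Finset.sum_const_zero, Finset.sum_ite_eq, Finset.sum_ite_eq', Finset.mem_univ,
    if_true]
  rw [Finset.sum_comm]
  exact Finset.sum_congr rfl fun p' _ => Finset.sum_congr rfl fun q' _ => by ring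

lemma pOut_eq (kk : a) : pOut e ρ kk = (Mbl e ρ kk).trace.re := by
  unfold pOut Mbl
  congr 1
  rw [Matrix.trace, Matrix.trace]
  simp only [Matrix.diag_apply, Matrix.mul_apply, Fintype.sum_prod_type, kroneckerMap_apply,
    Matrix.one_apply, proj_apply, Matrix.of_apply]
  simp only [ite_mul, one_mul, zero_mul, mul_ite, mul_zero, mul_one, Finset.sum_ite_irrel,
    Finset.sum_const_zero, Finset.sum_ite_eq, Finset.sum_ite_eq', Finset.mem_univ, if_true]
  refine Finset.sum_congr rfl fun x _ => ?_
  rw [Finset.sum_comm]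
  exact Finset.sum_congr rfl fun p _ => Finset.sum_congr rfl fun q _ => by ring

open scoped ComplexOrder in
lemma Mbl_posSemidef (hρ : ρ.PosSemidef) (kk : a) : (Mbl e ρ kk).PosSemidef := by
  have h : Mbl e ρ kk =
      (Matrix.of fun (p : s × a) (j : s) => if p.1 = j then e kk p.2 else 0)ᴴ * ρ *
      (Matrix.of fun (p : s × a) (j : s) => if p.1 = j then e kk p.2 else 0) := by
    ext i j
    simp only [Matrix.mul_apply, Matrix.conjTranspose_apply, Matrix.of_apply, Mbl,
      Fintype.sum_prod_type, Complex.star_def, apply_ite (starRingEnd ℂ), map_zero]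
    simp only [ite_mul, zero_mul, mul_ite, mul_zero, Finset.sum_ite_irrel,
      Finset.sum_const_zero, Finset.sum_ite_eq, Finset.sum_ite_eq', Finset.mem_univ, if_true,
      Finset.sum_mul, Finset.mul_sum]
    rw [Finset.sum_comm]
    exact Finset.sum_congr rfl fun p _ => Finset.sum_congr rfl fun q _ => by ring
  rw [h]
  exact hρ.conjTranspose_mul_mul_same _

lemma tensV_smul (c : ℂ) (u : s → ℂ) (x : a → ℂ) : tensV (c • u) x = c • tensV u x := by
  funext p; simp [tensV, mul_assoc]

lemma tensV_zero (u : s → ℂ) : tensV u (0 : a → ℂ) = 0 := by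
  funext p; simp [tensV]

lemma kron_mulVec_tensV (A : Matrix s s ℂ) (B : Matrix a a ℂ) (u : s → ℂ) (x : a → ℂ) :
    (A ⊗ₖ B) *ᵥ tensV u x = tensV (A *ᵥ u) (B *ᵥ x) := by
  funext ⟨i, p⟩
  simp only [Matrix.mulVec, dotProduct, Fintype.sum_prod_type, kroneckerMap_apply, tensV]
  rw [Finset.sum_mul_sum]
  exact Finset.sum_congr rfl fun j _ => Finset.sum_congr rfl fun q _ => by ring

lemma star_tensV_dot (u u' : s → ℂ) (x x' : a → ℂ) :
    star (tensV u x) ⬝ᵥ tensV u' x' = (star u ⬝ᵥ u') * (star x ⬝ᵥ x') := by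
  simp only [dotProduct, Pi.star_apply, tensV, Fintype.sum_prod_type, star_mul']
  rw [Finset.sum_mul_sum]
  exact Finset.sum_congr rfl fun i _ => Finset.sum_congr rfl fun p _ => by ring

lemma proj_mulVec (v x : a → ℂ) : proj v *ᵥ x = (star v ⬝ᵥ x) • v := by
  funext q
  simp only [Matrix.mulVec, dotProduct, proj_apply, Pi.smul_apply, smul_eq_mul, Pi.star_apply,
    Complex.star_def, Finset.sum_mul, Finset.mul_sum]
  exact Finset.sum_congr rfl fun y _ => by ring

lemma tensV_quad (u : s → ℂ) (kk : a) :
    star (tensV u (e kk)) ⬝ᵥ (ρ *ᵥ tensV u (e kk)) = star u ⬝ᵥ ((Mbl e ρ kk) *ᵥ u) := by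
  simp only [dotProduct, Matrix.mulVec, Pi.star_apply, tensV, Fintype.sum_prod_type, Mbl,
    Matrix.of_apply, dotProduct, star_mul', Complex.star_def, Finset.mul_sum, Finset.sum_mul]
  refine Finset.sum_congr rfl fun x _ => ?_
  rw [Finset.sum_comm]
  exact Finset.sum_congr rfl fun x1 _ => Finset.sum_congr rfl fun y _ =>
    Finset.sum_congr rfl fun x2 _ => by ring

lemma pinch_eq : pinchA e ρ = ∑ kk, Mbl e ρ kk ⊗ₖ proj (e kk) :=
  Finset.sum_congr rfl fun kk _ => PkρPk_eq e ρ kk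

lemma matrix_sum_mulVec {m : Type*} [Fintype m] (M : m → Matrix (s × a) (s × a) ℂ)
    (x : s × a → ℂ) : (∑ kk, M kk) *ᵥ x = ∑ kk, M kk *ᵥ x := by
  funext y
  simp only [Matrix.mulVec, dotProduct, Matrix.sum_apply, Finset.sum_apply, Finset.sum_mul]
  exact Finset.sum_comm

end Concrete

section EigTools
variable {n : Type*} [Fintype n] [DecidableEq n]

lemma onb_eigvec {A : Matrix n n ℂ} (hA : A.IsHermitian) :
    ONB (fun i => ⇑(hA.eigenvectorBasis i)) := by
  intro i j
  have h := (orthonormal_iff_ite.mp hA.eigenvectorBasis.orthonormal) i j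
  rw [EuclideanSpace.inner_eq_star_dotProduct] at h
  exact (dotProduct_comm _ _).trans h

lemma mulVec_eigvec {A : Matrix n n ℂ} (hA : A.IsHermitian) (i : n) :
    A *ᵥ ⇑(hA.eigenvectorBasis i) = ((hA.eigenvalues i : ℝ) : ℂ) • ⇑(hA.eigenvectorBasis i) := by
  rw [hA.mulVec_eigenvectorBasis]
  funext y
  simp [Complex.real_smul]

lemma herm_of_eig {A : Matrix n n ℂ} {w : n → n → ℂ} (hw : ONB w) {μ : n → ℝ}
    (heig : ∀ i, A *ᵥ w i = (μ i : ℂ) • w i) : A.IsHermitian := by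
  have h := eig_decomp hw heig
  rw [Matrix.IsHermitian, h]
  rw [Matrix.conjTranspose_mul, Matrix.conjTranspose_mul, Matrix.conjTranspose_conjTranspose,
    Matrix.diagonal_conjTranspose]
  have : star (fun i => ((μ i : ℝ) : ℂ)) = fun i => ((μ i : ℝ) : ℂ) := by
    funext i
    simp [Complex.star_def, Complex.conj_ofReal]
  rw [this]
  exact (mul_assoc _ _ _).symm

end EigTools

open scoped ComplexOrder in
/-- The locally accessible joint entropy `S_A(ρ_SA) = H({p_a}) + S(ρ_S|{Π_A^k})`
equals `S(Φ_A(ρ_SA))`, and hence the classical demon's work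
`W^C = kT[log₂ d_SA − S_A(ρ_SA)]` never exceeds the quantum demon's work
`W^Q = kT[log₂ d_SA − S(ρ_SA)]`. -/
theorem classical_work_le_quantum_work
    (ρ : Matrix (s × a) (s × a) ℂ) (hρ : ρ.PosSemidef) (htr : ρ.trace = 1)
    (e : a → a → ℂ) (he : ONB e) (k T : ℝ) (hk : 0 < k) (hT : 0 < T) :
    ((∑ j, Real.negMulLog (pOut e ρ j) / Real.log 2) +
        ∑ j, pOut e ρ j * Sent (postState e ρ j)) = Sent (pinchA e ρ) ∧
      k * T * (Real.logb 2 (Fintype.card (s × a)) - Sent (pinchA e ρ)) ≤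
        k * T * (Real.logb 2 (Fintype.card (s × a)) - Sent ρ) := by
  classical
  have hL2 : (0 : ℝ) < Real.log 2 := Real.log_pos (by norm_num)
  have hMps : ∀ kk : a, (Mbl e ρ kk).PosSemidef := fun kk => Mbl_posSemidef e ρ hρ kk
  set ν : a → s → ℝ := fun kk => (hMps kk).1.eigenvalues with hν
  set u : a → s → s → ℂ := fun kk i => ⇑((hMps kk).1.eigenvectorBasis i) with hu
  have huONB : ∀ kk, ONB (u kk) := fun kk => onb_eigvec (hMps kk).1
  have huEig : ∀ kk i, Mbl e ρ kk *ᵥ u kk i = ((ν kk i : ℝ) : ℂ) • u kk i :=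
    fun kk i => mulVec_eigvec (hMps kk).1 i
  have hνnn : ∀ kk i, 0 ≤ ν kk i := fun kk i => (hMps kk).eigenvalues_nonneg i
  set w : s × a → s × a → ℂ := fun ik => tensV (u ik.2 ik.1) (e ik.2) with hw
  set μ : s × a → ℝ := fun ik => ν ik.2 ik.1 with hμ
  have hwONB : ONB w := by
    rintro ⟨i, kk⟩ ⟨j, ll⟩
    rw [show w (i, kk) = tensV (u kk i) (e kk) from rfl,
      show w (j, ll) = tensV (u ll j) (e ll) from rfl, star_tensV_dot]
    by_cases h : kk = ll
    · subst h
      rw [huONB kk i j, he kk kk]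
      simp [Prod.ext_iff]
    · rw [he kk ll, if_neg h]
      simp [Prod.ext_iff, h]
  have hwEig : ∀ ik, pinchA e ρ *ᵥ w ik = ((μ ik : ℝ) : ℂ) • w ik := by
    rintro ⟨i, kk⟩
    rw [pinch_eq, matrix_sum_mulVec]
    have hterm : ∀ ll, (Mbl e ρ ll ⊗ₖ proj (e ll)) *ᵥ w (i, kk)
        = if ll = kk then ((ν kk i : ℝ) : ℂ) • w (i, kk) else 0 := by
      intro ll
      rw [show w (i, kk) = tensV (u kk i) (e kk) from rfl, kron_mulVec_tensV, proj_mulVec,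
        he ll kk]
      by_cases h : ll = kk
      · subst h
        rw [if_pos rfl, if_pos rfl, one_smul, huEig, tensV_smul]
      · rw [if_neg h, if_neg h, zero_smul, tensV_zero]
    rw [Finset.sum_congr rfl fun ll _ => hterm ll]
    simp
    rfl
  have hermPinch : (pinchA e ρ).IsHermitian := herm_of_eig hwONB hwEig
  have SentPinch : Sent (pinchA e ρ) = (∑ kk, ∑ i, Real.negMulLog (ν kk i)) / Real.log 2 := by
    simp only [Sent]
    rw [dif_pos hermPinch, ← Finset.sum_div]
    congr 1
    rw [sum_f_eig hermPinch hwONB hwEig Real.negMulLog, Fintype.sum_prod_type]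
    exact Finset.sum_comm
  have hp : ∀ kk, pOut e ρ kk = ∑ i, ν kk i := by
    intro kk
    rw [pOut_eq, trace_eq_sum_mu (huONB kk) (huEig kk)]
    simp
  have key1 : ∀ kk, Real.negMulLog (pOut e ρ kk) / Real.log 2
      + pOut e ρ kk * Sent (postState e ρ kk)
      = (∑ i, Real.negMulLog (ν kk i)) / Real.log 2 := by
    intro kk
    by_cases hzero : pOut e ρ kk = 0
    · have hsum0 : ∑ i, ν kk i = 0 := by rw [← hp kk, hzero]
      have hν0 : ∀ i ∈ Finset.univ, ν kk i = 0 :=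
        (Finset.sum_eq_zero_iff_of_nonneg (fun i _ => hνnn kk i)).mp hsum0
      rw [hzero]
      simp [fun i => hν0 i (Finset.mem_univ i)]
    · set p := pOut e ρ kk with hpdef
      have hpnn : 0 ≤ p := by
        rw [hpdef, hp kk]
        exact Finset.sum_nonneg fun i _ => hνnn kk i
      have hppos : 0 < p := lt_of_le_of_ne hpnn (Ne.symm hzero)
      have hpostEq : postState e ρ kk = ((p : ℂ))⁻¹ • (Mbl e ρ kk ⊗ₖ proj (e kk)) := by
        unfold postState
        rw [PkρPk_eq]
      set w2 : s × a → s × a → ℂ := fun il => tensV (u kk il.1) (e il.2) with hw2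
      set μ2 : s × a → ℝ := fun il => if il.2 = kk then ν kk il.1 / p else 0 with hμ2
      have hw2ONB : ONB w2 := by
        rintro ⟨i, l⟩ ⟨j, m⟩
        rw [show w2 (i, l) = tensV (u kk i) (e l) from rfl,
          show w2 (j, m) = tensV (u kk j) (e m) from rfl, star_tensV_dot]
        by_cases h : l = m
        · subst h
          rw [huONB kk i j, he l l]
          simp [Prod.ext_iff]
        · rw [he l m, if_neg h]
          simp [Prod.ext_iff, h]
      have hw2Eig : ∀ il, postState e ρ kk *ᵥ w2 il = ((μ2 il : ℝ) : ℂ) • w2 il := by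
        rintro ⟨i, l⟩
        rw [hpostEq, Matrix.smul_mulVec,
          show w2 (i, l) = tensV (u kk i) (e l) from rfl, kron_mulVec_tensV, proj_mulVec,
          he kk l]
        by_cases h : l = kk
        · subst h
          rw [if_pos rfl, one_smul, huEig, tensV_smul, smul_smul]
          rw [show μ2 (i, l) = ν l i / p from by simp [hμ2]]
          congr 1
          rw [div_eq_inv_mul]
          push_cast
          ring
        · rw [if_neg fun hc => h hc.symm, zero_smul, tensV_zero, smul_zero]
          rw [show μ2 (i, l) = 0 from by simp [hμ2, h]]
          simp
      have hermPost : (postState e ρ kk).IsHermitian := herm_of_eig hw2ONB hw2Eig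
      have SentPost : Sent (postState e ρ kk)
          = (∑ i, Real.negMulLog (ν kk i / p)) / Real.log 2 := by
        simp only [Sent]
        rw [dif_pos hermPost, ← Finset.sum_div]
        congr 1
        rw [sum_f_eig hermPost hw2ONB hw2Eig Real.negMulLog, Fintype.sum_prod_type]
        have : ∀ i : s, ∑ l : a, Real.negMulLog (μ2 (i, l)) = Real.negMulLog (ν kk i / p) := by
          intro i
          rw [show (fun l : a => Real.negMulLog (μ2 (i, l)))
            = fun l => if l = kk then Real.negMulLog (ν kk i / p) else 0 from ?_]
          · simp
          · funext l
            by_cases h : l = kk <;> simp [hμ2, h]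
        exact Finset.sum_congr rfl fun i _ => this i
      have hsum : ∑ i, Real.negMulLog (ν kk i)
          = Real.negMulLog p + p * ∑ i, Real.negMulLog (ν kk i / p) := by
        have hterm : ∀ i, Real.negMulLog (ν kk i)
            = (ν kk i / p) * Real.negMulLog p + p * Real.negMulLog (ν kk i / p) := by
          intro i
          conv_lhs => rw [show ν kk i = p * (ν kk i / p) by field_simp]
          rw [Real.negMulLog_mul]
        rw [Finset.sum_congr rfl fun i _ => hterm i, Finset.sum_add_distrib, ← Finset.sum_mul,
          ← Finset.mul_sum, ← Finset.sum_div, ← hp kk, ← hpdef, div_self hzero, one_mul]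
      rw [SentPost, hsum]
      field_simp
  constructor
  · rw [SentPinch, ← Finset.sum_add_distrib, Finset.sum_congr rfl fun kk _ => key1 kk,
      ← Finset.sum_div]
  · -- part 2
    have hvONB : ONB (fun j => ⇑(hρ.1.eigenvectorBasis j)) := onb_eigvec hρ.1
    have hvEig : ∀ j, ρ *ᵥ ⇑(hρ.1.eigenvectorBasis j)
        = ((hρ.1.eigenvalues j : ℝ) : ℂ) • ⇑(hρ.1.eigenvectorBasis j) :=
      fun j => mulVec_eigvec hρ.1 j
    have hlamnn : ∀ j, 0 ≤ hρ.1.eigenvalues j := fun j => hρ.eigenvalues_nonneg j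
    set v : s × a → s × a → ℂ := fun j => ⇑(hρ.1.eigenvectorBasis j) with hv
    set D : s × a → s × a → ℝ := fun i j => Complex.normSq (star (v j) ⬝ᵥ w i) with hD
    have hDnn : ∀ i j, 0 ≤ D i j := fun i j => Complex.normSq_nonneg _
    have hnormw : ∀ i, star (w i) ⬝ᵥ w i = 1 := by
      intro i
      have := hwONB i i
      simpa using this
    have hnormv : ∀ j, star (v j) ⬝ᵥ v j = 1 := by
      intro j
      have := hvONB j j
      simpa using this
    have hrow : ∀ i, ∑ j, D i j = 1 := fun i => sum_normSq_eq_one hvONB (hnormw i)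
    have hcol : ∀ j, ∑ i, D i j = 1 := by
      intro j
      have heq : ∀ i, D i j = Complex.normSq (star (w i) ⬝ᵥ v j) := fun i => by
        rw [show D i j = Complex.normSq (star (v j) ⬝ᵥ w i) from rfl,
          star_dot_conj (v j) (w i), Complex.normSq_conj]
      rw [Finset.sum_congr rfl fun i _ => heq i]
      exact sum_normSq_eq_one hwONB (hnormv j)
    have hmuD : ∀ i, μ i = ∑ j, D i j * hρ.1.eigenvalues j := by
      rintro ⟨i, kk⟩
      have h1 : star (w (i, kk)) ⬝ᵥ (ρ *ᵥ w (i, kk)) = ((μ (i, kk) : ℝ) : ℂ) := by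
        rw [show w (i, kk) = tensV (u kk i) (e kk) from rfl, tensV_quad, huEig]
        rw [dotProduct_smul, huONB kk i i]
        simp
        rfl
      have h2 := quad_form_eq hvONB hvEig (w (i, kk))
      rw [h1] at h2
      have h3 : ((μ (i, kk) : ℝ) : ℂ) = ((∑ j, D (i, kk) j * hρ.1.eigenvalues j : ℝ) : ℂ) := by
        rw [h2]
        push_cast
        exact Finset.sum_congr rfl fun j _ => mul_comm _ _
      exact_mod_cast h3
    have hmaj := negMulLog_majorize hlamnn hDnn hrow hcol hmuD
    have Sentρ : Sent ρ = (∑ j, Real.negMulLog (hρ.1.eigenvalues j)) / Real.log 2 := by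
      simp only [Sent]
      rw [dif_pos hρ.1, ← Finset.sum_div]
    have SentPinch2 : Sent (pinchA e ρ) = (∑ ik, Real.negMulLog (μ ik)) / Real.log 2 := by
      simp only [Sent]
      rw [dif_pos hermPinch, ← Finset.sum_div]
      congr 1
      exact sum_f_eig hermPinch hwONB hwEig _
    have hSle : Sent ρ ≤ Sent (pinchA e ρ) := by
      rw [Sentρ, SentPinch2]
      exact (div_le_div_iff_of_pos_right hL2).mpr hmaj
    have hsub := sub_le_sub_left hSle (Real.logb 2 (Fintype.card (s × a)))
    exact mul_le_mul_of_nonneg_left hsub (le_of_lt (mul_pos hk hT))
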